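/- Let A be a real symmetric n×n matrix with simple nonzero eigenvalue λ, and B ∈ ℝ^{n×m}. Then the mode λ is uncontrollable (i.e., there is a nonzero v with vᵀA = λvᵀ and vᵀB = 0) if and only if adj(λI − A)·B = 0, equivalently tr([adj(λI−A)B][adj(λI−A)B]ᵀ) = 0. -/

import Mathlib

open Matrix Polynomial Finset

private lemma aux_charpoly_conj_diag {n : ℕ} (V W D : Matrix (Fin n) (Fin n) ℝ)
    (hVW : V * W = 1) :
    (V * D * W).charpoly = D.charpoly := by
  have hmap : ∀ M N : Matrix (Fin n) (Fin n) ℝ,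
      (M * N).map (C : ℝ →+* ℝ[X]) = M.map C * N.map C := fun M N => Matrix.map_mul
  have key : charmatrix (V * D * W) = V.map C * charmatrix D * W.map C := by
    rw [charmatrix, charmatrix]
    simp only [RingHom.mapMatrix_apply, scalar_apply, ← smul_one_eq_diagonal]
    rw [mul_sub, sub_mul, mul_smul_comm, smul_mul_assoc, mul_one, ← hmap, hVW,
      Matrix.map_one C (map_zero C) (map_one C)]
    rw [hmap, hmap]
  have hdet : (V.map (C : ℝ →+* ℝ[X])).det * (W.map C).det = 1 := by
    rw [← det_mul, ← hmap, hVW, Matrix.map_one C (map_zero C) (map_one C), det_one]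
  rw [Matrix.charpoly, Matrix.charpoly, key, det_mul, det_mul]
  rw [mul_right_comm, hdet, one_mul]

private lemma aux_charpoly_diag {n : ℕ} (d : Fin n → ℝ) :
    (diagonal d).charpoly = ∏ i, (X - C (d i)) := by
  rw [charpoly_of_upperTriangular _ (blockTriangular_diagonal d)]
  simp

private lemma aux_unique_root {n : ℕ} (μ : Fin n → ℝ) (lam : ℝ)
    (h : (∏ i, (X - C (μ i))).rootMultiplicity lam = 1) :
    ∃ i₀, μ i₀ = lam ∧ ∀ i, μ i = lam → i = i₀ := by
  have hroots : (∏ i, (X - C (μ i))).roots = Multiset.map μ Finset.univ.val := by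
    have := roots_multiset_prod_X_sub_C (Multiset.map μ Finset.univ.val)
    rw [← this]
    congr 1
    rw [Multiset.map_map]
    rfl
  have hcount : (Multiset.map μ Finset.univ.val).count lam = 1 := by
    rw [← hroots, count_roots]; exact h
  rw [Multiset.count_map] at hcount
  have hcard : (Finset.univ.filter fun i => μ i = lam).card = 1 := by
    rw [← hcount, Finset.card, Finset.filter_val]
    exact congrArg Multiset.card (Multiset.filter_congr (fun x _ => ⟨Eq.symm, Eq.symm⟩))
  obtain ⟨i₀, hi₀⟩ := Finset.card_eq_one.mp hcard
  refine ⟨i₀, ?_, ?_⟩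
  · have : i₀ ∈ Finset.univ.filter fun i => μ i = lam := hi₀ ▸ Finset.mem_singleton_self i₀
    exact (Finset.mem_filter.mp this).2
  · intro i hi
    have : i ∈ Finset.univ.filter fun i => μ i = lam :=
      Finset.mem_filter.mpr ⟨Finset.mem_univ _, hi⟩
    rw [hi₀, Finset.mem_singleton] at this
    exact this

private lemma aux_adj_conj {n : ℕ} (V W E : Matrix (Fin n) (Fin n) ℝ)
    (hVW : V * W = 1) (hWV : W * V = 1) :
    adjugate (V * E * W) = V * adjugate E * W := by
  have hadjV : adjugate V = V.det • W := by
    have h := mul_adjugate V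
    calc adjugate V = 1 * adjugate V := (one_mul _).symm
    _ = W * (V * adjugate V) := by rw [← hWV, mul_assoc]
    _ = W * (V.det • 1) := by rw [h]
    _ = V.det • W := by rw [mul_smul_comm, mul_one]
  have hadjW : adjugate W = W.det • V := by
    have h := mul_adjugate W
    calc adjugate W = 1 * adjugate W := (one_mul _).symm
    _ = V * (W * adjugate W) := by rw [← hVW, mul_assoc]
    _ = V * (W.det • 1) := by rw [h]
    _ = W.det • V := by rw [mul_smul_comm, mul_one]
  have hdet : W.det * V.det = 1 := by rw [← det_mul, hWV, det_one]
  rw [adjugate_mul_distrib, adjugate_mul_distrib, hadjV, hadjW]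
  simp only [Matrix.smul_mul, Matrix.mul_smul, smul_smul]
  rw [mul_comm, hdet, one_smul, mul_assoc]

private lemma aux_trace_iff {n m : ℕ} (P : Matrix (Fin n) (Fin m) ℝ) :
    (P * Pᵀ).trace = 0 ↔ P = 0 := by
  have ht : (P * Pᵀ).trace = ∑ i, ∑ j, P i j * P i j := by
    simp [Matrix.trace, Matrix.diag, Matrix.mul_apply]
  rw [ht]
  constructor
  · intro h
    have h1 := (Finset.sum_eq_zero_iff_of_nonneg
      (fun i _ => Finset.sum_nonneg fun j _ => mul_self_nonneg _)).mp h
    ext i j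
    have h2 := (Finset.sum_eq_zero_iff_of_nonneg
      (fun j _ => mul_self_nonneg _)).mp (h1 i (Finset.mem_univ i)) j (Finset.mem_univ j)
    exact mul_self_eq_zero.mp h2
  · intro h
    rw [h]
    simp

/-- For a real symmetric matrix `A` with simple nonzero eigenvalue `λ`, the mode `λ`
is uncontrollable iff `adj(λI − A)·B = 0`, equivalently
`tr([adj(λI−A)B][adj(λI−A)B]ᵀ) = 0`. -/
theorem uncontrollable_mode_iff_adjugate {n m : ℕ}
    (A : Matrix (Fin n) (Fin n) ℝ) (B : Matrix (Fin n) (Fin m) ℝ)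
    (hA : A.IsSymm) (lam : ℝ) (hlam : lam ≠ 0)
    (hroot : A.charpoly.IsRoot lam)
    (hsimple : A.charpoly.rootMultiplicity lam = 1) :
    ((∃ v : Fin n → ℝ, v ≠ 0 ∧ v ᵥ* A = lam • v ∧ v ᵥ* B = 0) ↔
        Matrix.adjugate (lam • (1 : Matrix (Fin n) (Fin n) ℝ) - A) * B = 0) ∧
      ((∃ v : Fin n → ℝ, v ≠ 0 ∧ v ᵥ* A = lam • v ∧ v ᵥ* B = 0) ↔
        ((Matrix.adjugate (lam • (1 : Matrix (Fin n) (Fin n) ℝ) - A) * B) *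
          (Matrix.adjugate (lam • (1 : Matrix (Fin n) (Fin n) ℝ) - A) * B)ᵀ).trace = 0) := by
  have hH : A.IsHermitian := by
    rw [Matrix.IsHermitian, conjTranspose_eq_transpose_of_trivial]; exact hA
  set V : Matrix (Fin n) (Fin n) ℝ := (hH.eigenvectorUnitary : Matrix (Fin n) (Fin n) ℝ) with hV
  set W : Matrix (Fin n) (Fin n) ℝ := star V with hW
  have hVW : V * W = 1 := Matrix.mem_unitaryGroup_iff.mp hH.eigenvectorUnitary.2
  have hWV : W * V = 1 := Matrix.mem_unitaryGroup_iff'.mp hH.eigenvectorUnitary.2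
  set μ : Fin n → ℝ := hH.eigenvalues with hμ
  have hspec : A = V * diagonal μ * W := by simpa using hH.spectral_theorem
  have hcharA : A.charpoly = ∏ i, (X - C (μ i)) := by
    conv_lhs => rw [hspec]
    rw [aux_charpoly_conj_diag V W _ hVW, aux_charpoly_diag]
  have hmult : (∏ i, (X - C (μ i))).rootMultiplicity lam = 1 := by
    rw [← hcharA]; exact hsimple
  obtain ⟨i₀, hμi₀, huniq⟩ := aux_unique_root μ lam hmult
  set w : Fin n → ℝ := ⇑(hH.eigenvectorBasis i₀) with hw
  have hVw : ∀ a, V a i₀ = w a := fun a => rfl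
  have hAw : A *ᵥ w = lam • w := by
    have := hH.mulVec_eigenvectorBasis i₀
    rw [show hH.eigenvalues i₀ = lam from hμi₀] at this
    exact this
  have hw0 : w ≠ 0 := by
    intro h
    have hb := (hH.eigenvectorBasis).toBasis.ne_zero i₀
    rw [OrthonormalBasis.coe_toBasis] at hb
    exact hb (by ext a; exact congrFun h a)
  have hsym : ∀ x : Fin n → ℝ, x ᵥ* A = A *ᵥ x := by
    intro x
    rw [← Matrix.mulVec_transpose, hA.eq]
  -- kernel is spanned by w
  have hker : ∀ x : Fin n → ℝ, A *ᵥ x = lam • x → ∃ t : ℝ, x = t • w := by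
    intro x hx
    set y : Fin n → ℝ := W *ᵥ x with hy
    have h1 : diagonal μ *ᵥ y = lam • y := by
      have e1 : W *ᵥ (A *ᵥ x) = diagonal μ *ᵥ y := by
        conv_lhs => rw [hspec]
        rw [Matrix.mulVec_mulVec, ← mul_assoc, ← mul_assoc, hWV, one_mul,
          ← Matrix.mulVec_mulVec]
      have e2 : W *ᵥ (A *ᵥ x) = lam • y := by
        rw [hx, Matrix.mulVec_smul]
      rw [← e1, e2]
    have h2 : ∀ i, i ≠ i₀ → y i = 0 := by
      intro i hi
      have := congrFun h1 i
      rw [Matrix.mulVec_diagonal] at this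
      have hne : μ i - lam ≠ 0 := sub_ne_zero.mpr (fun hc => hi (huniq i hc))
      have : (μ i - lam) * y i = 0 := by
        simp only [Pi.smul_apply, smul_eq_mul] at this
        ring_nf
        linarith [this]
      exact (mul_eq_zero.mp this).resolve_left hne
    refine ⟨y i₀, ?_⟩
    have hx' : x = V *ᵥ y := by
      rw [hy, Matrix.mulVec_mulVec, hVW, Matrix.one_mulVec]
    have hyy : y = y i₀ • (Pi.single i₀ (1 : ℝ) : Fin n → ℝ) := by
      funext i
      by_cases hi : i = i₀
      · subst hi
        rw [Pi.smul_apply, Pi.single_eq_same, smul_eq_mul, mul_one]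
      · rw [h2 i hi, Pi.smul_apply, Pi.single_eq_of_ne hi, smul_eq_mul, mul_zero]
    rw [hx', hyy, Matrix.mulVec_smul]
    congr 1
    · rw [Pi.smul_apply, Pi.single_eq_same, smul_eq_mul, mul_one]
    · funext a
      rw [Matrix.mulVec_single]
      show V a i₀ * 1 = w a
      rw [mul_one, hVw a]
  -- decomposition of lam•1 - A
  set d : Fin n → ℝ := fun i => lam - μ i with hd
  have hMdec : lam • (1 : Matrix (Fin n) (Fin n) ℝ) - A = V * diagonal d * W := by
    have hdd : diagonal d = lam • (1 : Matrix (Fin n) (Fin n) ℝ) - diagonal μ := by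
      rw [smul_one_eq_diagonal, diagonal_sub]
    rw [hdd, mul_sub, sub_mul, mul_smul_comm, mul_one, smul_mul_assoc, hVW, ← hspec]
  set c : ℝ := ∏ j ∈ Finset.univ.erase i₀, (lam - μ j) with hc
  have hc0 : c ≠ 0 := by
    apply Finset.prod_ne_zero_iff.mpr
    intro j hj
    have : j ≠ i₀ := (Finset.mem_erase.mp hj).1
    exact sub_ne_zero.mpr (fun hc' => this (huniq j hc'.symm))
  have hg : (fun i => ∏ j ∈ Finset.univ.erase i, d j) = Pi.single i₀ c := by
    funext i
    by_cases hi : i = i₀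
    · subst hi
      simp only [Pi.single_eq_same, hc]
      exact rfl
    · rw [Pi.single_eq_of_ne hi]
      apply Finset.prod_eq_zero (Finset.mem_erase.mpr ⟨Ne.symm hi, Finset.mem_univ _⟩)
      rw [hd]
      simp [hμi₀]
  have hN : ∀ a b, adjugate (lam • (1 : Matrix (Fin n) (Fin n) ℝ) - A) a b
      = c * (w a * w b) := by
    intro a b
    rw [hMdec, aux_adj_conj V W _ hVW hWV, adjugate_diagonal, hg]
    rw [Matrix.mul_apply]
    rw [Finset.sum_eq_single i₀]
    · rw [Matrix.mul_diagonal, Pi.single_eq_same]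
      have hWb : W i₀ b = w b := by
        rw [hW, Matrix.star_apply, star_trivial, hVw b]
      rw [hWb, hVw a]
      ring
    · intro k _ hk
      rw [Matrix.mul_diagonal, Pi.single_eq_of_ne hk]
      ring
    · intro hk
      exact absurd (Finset.mem_univ i₀) hk
  -- main equivalence
  have key : (∃ v : Fin n → ℝ, v ≠ 0 ∧ v ᵥ* A = lam • v ∧ v ᵥ* B = 0) ↔
      Matrix.adjugate (lam • (1 : Matrix (Fin n) (Fin n) ℝ) - A) * B = 0 := by
    constructor
    · rintro ⟨v, hv0, hvA, hvB⟩
      have hAv : A *ᵥ v = lam • v := by rw [← hsym, hvA]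
      obtain ⟨t, ht⟩ := hker v hAv
      have ht0 : t ≠ 0 := by
        rintro rfl
        rw [zero_smul] at ht
        exact hv0 ht
      have hwB : ∀ j, ∑ b, w b * B b j = 0 := by
        intro j
        have h1 : (t • w) ᵥ* B = 0 := ht ▸ hvB
        have h2 := congrFun h1 j
        simp only [Matrix.vecMul, dotProduct, Pi.smul_apply, smul_eq_mul, Pi.zero_apply] at h2
        have h3 : t * ∑ b, w b * B b j = 0 := by
          rw [Finset.mul_sum]
          rw [← h2]
          apply Finset.sum_congr rfl
          intro b _
          ring
        exact (mul_eq_zero.mp h3).resolve_left ht0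
      ext a j
      rw [Matrix.mul_apply, Matrix.zero_apply]
      have : ∀ b, adjugate (lam • (1 : Matrix (Fin n) (Fin n) ℝ) - A) a b * B b j
          = (c * w a) * (w b * B b j) := by
        intro b; rw [hN a b]; ring
      rw [Finset.sum_congr rfl (fun b _ => this b), ← Finset.mul_sum, hwB j, mul_zero]
    · intro h
      refine ⟨w, hw0, ?_, ?_⟩
      · rw [hsym, hAw]
      · obtain ⟨a, ha⟩ : ∃ a, w a ≠ 0 := by
          by_contra hcon
          push_neg at hcon
          exact hw0 (funext hcon)
        funext j
        have h2 := congrFun (congrFun h a) j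
        rw [Matrix.mul_apply, Matrix.zero_apply] at h2
        have h3 : (c * w a) * (∑ b, w b * B b j) = 0 := by
          rw [Finset.mul_sum, ← h2]
          apply Finset.sum_congr rfl
          intro b _
          rw [hN a b]
          ring
        have h4 : (∑ b, w b * B b j) = 0 :=
          (mul_eq_zero.mp h3).resolve_left (mul_ne_zero hc0 ha)
        simp only [Matrix.vecMul, dotProduct, Pi.zero_apply]
        exact h4
  refine ⟨key, ?_⟩
  rw [aux_trace_iff]
  exact key
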